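/- Let f be a normal function with hyperation F, let g be a left adjoint of f, and let G be the cohyperation of g. Then for all ordinals ξ < ζ: G ξ ∘ F ζ = F (ζ - ξ) and G ζ ∘ F ξ = G (ζ - ξ), where ζ - ξ denotes the unique ordinal η with ξ + η = ζ. -/

import Mathlib

open Ordinal Set

/-- An ordinal function is *initial* if it maps every initial segment onto an initial segment. -/
def Initial (g : Ordinal → Ordinal) : Prop :=
  ∀ β : Ordinal, ∃ γ : Ordinal, g '' {α | α < β} = {α | α < γ}

/-- A *weak hyperation* of a normal function `f`. -/
def WeakHyperation (f : Ordinal → Ordinal) (g : Ordinal → Ordinal → Ordinal) : Prop :=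
  (∀ ξ : Ordinal, Order.IsNormal (g ξ)) ∧ g 0 = id ∧ g 1 = f ∧
    ∀ ξ ζ : Ordinal, g (ξ + ζ) = g ξ ∘ g ζ

/-- `F` is *the hyperation* of `f`: the pointwise minimal weak hyperation. -/
def IsHyperation (f : Ordinal → Ordinal) (F : Ordinal → Ordinal → Ordinal) : Prop :=
  WeakHyperation f F ∧
    ∀ h : Ordinal → Ordinal → Ordinal, WeakHyperation f h → ∀ ξ ζ : Ordinal, F ξ ζ ≤ h ξ ζ

/-- A *weak cohyperation* of an initial function `f`. -/
def WeakCohyperation (f : Ordinal → Ordinal) (g : Ordinal → Ordinal → Ordinal) : Prop :=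
  (∀ ξ : Ordinal, Initial (g ξ)) ∧ g 0 = id ∧ g 1 = f ∧
    ∀ ξ ζ : Ordinal, g (ξ + ζ) = g ζ ∘ g ξ

/-- `G` is *the cohyperation* of `f`: the pointwise maximal weak cohyperation. -/
def IsCohyperation (f : Ordinal → Ordinal) (G : Ordinal → Ordinal → Ordinal) : Prop :=
  WeakCohyperation f G ∧
    ∀ h : Ordinal → Ordinal → Ordinal, WeakCohyperation f h → ∀ ξ α : Ordinal, h ξ α ≤ G ξ α

/-- `g` is a *left adjoint* of `f`. -/
def LeftAdjoint (f g : Ordinal → Ordinal) : Prop :=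
  ∀ α β : Ordinal, (α = f β → g α = β) ∧ (α < f β → g α < β)

/-! ### Helper lemmas -/

lemma Initial.le_self {g : Ordinal → Ordinal} (h : Initial g) : ∀ x, g x ≤ x := by
  intro x
  induction x using Ordinal.induction with
  | h x IH =>
    by_contra hx
    push_neg at hx
    obtain ⟨γ, hγ⟩ := h (x + 1)
    have hgx : g x ∈ {α | α < γ} := by
      rw [← hγ]; exact ⟨x, lt_add_one x, rfl⟩
    have hxγ : x < γ := lt_trans hx hgx
    have : x ∈ g '' {α | α < x + 1} := by rw [hγ]; exact hxγ
    obtain ⟨y, hy, hyx⟩ := this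
    have hy' : y ≤ x := Order.lt_add_one_iff.mp hy
    rcases lt_or_eq_of_le hy' with hlt | heq
    · exact absurd (hyx ▸ IH y hlt) (not_le.2 (hyx ▸ hlt))
    · rw [heq] at hyx; exact absurd hyx (ne_of_gt hx)

lemma Initial.comp {g₁ g₂ : Ordinal → Ordinal} (h₁ : Initial g₁) (h₂ : Initial g₂) :
    Initial (g₂ ∘ g₁) := by
  intro β
  obtain ⟨γ, hγ⟩ := h₁ β
  obtain ⟨δ, hδ⟩ := h₂ γ
  exact ⟨δ, by rw [Set.image_comp, hγ, hδ]⟩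

lemma Initial.id : Initial (id : Ordinal → Ordinal) := fun β => ⟨β, by simp⟩

lemma Initial.const_zero : Initial (fun _ : Ordinal => (0 : Ordinal)) := by
  intro β
  rcases eq_or_ne β 0 with rfl | hβ
  · refine ⟨0, ?_⟩
    ext x
    simp only [Set.mem_image, Set.mem_setOf_eq]
    constructor
    · rintro ⟨y, hy, -⟩; exact absurd hy not_lt_zero
    · intro hx; exact absurd hx not_lt_zero
  · refine ⟨1, ?_⟩
    ext x
    simp only [Set.mem_image, Set.mem_setOf_eq]
    constructor
    · rintro ⟨y, _, rfl⟩; exact lt_one_iff_zero.2 rfl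
    · intro hx
      exact ⟨0, pos_iff_ne_zero.2 hβ, (lt_one_iff_zero.1 hx).symm⟩

lemma Initial.iterate {g : Ordinal → Ordinal} (h : Initial g) (n : ℕ) : Initial g^[n] := by
  induction n with
  | zero => exact Initial.id
  | succ n IH => rw [Function.iterate_succ']; exact IH.comp h

/-- A downward closed bounded set of ordinals is an initial segment. -/
lemma downward_closed_eq_Iio {s : Set Ordinal} {β : Ordinal} (hb : ∀ x ∈ s, x < β)
    (dc : ∀ u v : Ordinal, u < v → v ∈ s → u ∈ s) : ∃ γ, s = {α | α < γ} := by
  have hne : sᶜ.Nonempty := ⟨β, fun hβ => lt_irrefl β (hb β hβ)⟩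
  refine ⟨sInf sᶜ, ?_⟩
  ext x
  simp only [Set.mem_setOf_eq]
  constructor
  · intro hx
    by_contra hc
    push_neg at hc
    have hmem : sInf sᶜ ∈ sᶜ := csInf_mem hne
    rcases lt_or_eq_of_le hc with hlt | heq
    · exact hmem (dc _ _ hlt hx)
    · exact hmem (heq ▸ hx)
  · intro hx
    by_contra hc
    exact absurd (csInf_le' (Set.mem_compl hc)) (not_le.2 hx)

/-- A generalized absorption lemma for additively principal ordinals. -/
lemma principal_absorp {l r c : Ordinal} (hP : Ordinal.Principal (· + ·) l)
    (hr : r < l) (hc : l ≤ c) : r + c = c := by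
  have h1 : l + (c - l) = c := Ordinal.add_sub_cancel_of_le hc
  calc r + c = r + (l + (c - l)) := by rw [h1]
    _ = (r + l) + (c - l) := by rw [add_assoc]
    _ = l + (c - l) := by rw [Ordinal.principal_add_iff_add_left_eq_self.1 hP r hr]
    _ = c := h1

noncomputable def natOf (o : Ordinal) : ℕ := o.card.toNat

lemma natOf_cast (n : ℕ) : natOf (n : Ordinal) = n := by
  simp [natOf]

lemma natOf_spec {o : Ordinal} (h : o < ω) : (natOf o : Ordinal) = o := by
  obtain ⟨n, rfl⟩ := Ordinal.lt_omega0.1 h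
  rw [natOf_cast]

/-! ### The hyperation witness family `kfam` -/

lemma mul_add_div_mod {l q r : Ordinal} (hl : l ≠ 0) (hr : r < l) :
    (l * q + r) / l = q ∧ (l * q + r) % l = r := by
  have h1 : (l * q + r) / l = q + r / l := Ordinal.mul_add_div q hl r
  have h2 : r / l = 0 := Ordinal.div_eq_zero_of_lt hr
  constructor
  · rw [h1, h2, add_zero]
  · rw [Ordinal.mod_def, h1, h2, add_zero, Ordinal.add_sub_cancel]

noncomputable def kfam (F : Ordinal → Ordinal → Ordinal) (Φ : Ordinal → Ordinal) (l ξ : Ordinal) :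
    Ordinal → Ordinal :=
  F (l * (ω * (ξ / l / ω))) ∘ Φ^[natOf (ξ / l % ω)] ∘ F (ξ % l)

lemma kfam_eval (F : Ordinal → Ordinal → Ordinal) (Φ : Ordinal → Ordinal) {l : Ordinal}
    (hl : l ≠ 0) (u : Ordinal) (m : ℕ) {r : Ordinal} (hr : r < l) :
    kfam F Φ l (l * (ω * u + m) + r) = F (l * (ω * u)) ∘ Φ^[m] ∘ F r := by
  have hq := (mul_add_div_mod hl hr (q := ω * u + m)).1
  have hm := (mul_add_div_mod hl hr (q := ω * u + m)).2
  have hq2 := (mul_add_div_mod omega0_ne_zero (nat_lt_omega0 m) (q := u)).1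
  have hm2 := (mul_add_div_mod omega0_ne_zero (nat_lt_omega0 m) (q := u)).2
  unfold kfam
  rw [hq, hm, hq2, hm2, natOf_cast]

lemma kfam_decomp {l : Ordinal} (hl : l ≠ 0) (ξ : Ordinal) :
    ∃ (u : Ordinal) (m : ℕ) (r : Ordinal), r < l ∧ ξ = l * (ω * u + m) + r := by
  refine ⟨ξ / l / ω, natOf (ξ / l % ω), ξ % l, Ordinal.mod_lt ξ hl, ?_⟩
  rw [natOf_spec (Ordinal.mod_lt _ omega0_ne_zero), Ordinal.div_add_mod,
    Ordinal.div_add_mod]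

theorem kfam_weakHyperation {f Φ : Ordinal → Ordinal} {F : Ordinal → Ordinal → Ordinal}
    {l : Ordinal}
    (Fn : ∀ ξ, Order.IsNormal (F ξ)) (F0 : F 0 = id) (F1 : F 1 = f)
    (Fadd : ∀ ξ ζ, F (ξ + ζ) = F ξ ∘ F ζ)
    (hP : Ordinal.Principal (· + ·) l) (hl2 : 2 ≤ l)
    (hΦn : Order.IsNormal Φ)
    (hΦD : ∀ r x, r < l → F r (Φ x) = Φ x)
    (hΦfix : ∀ x, F l x = x → Φ x = x) :
    WeakHyperation f (kfam F Φ l) ∧ kfam F Φ l l = Φ := by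
  have hl1 : (1 : Ordinal) < l := lt_of_lt_of_le one_lt_two hl2
  have hl0 : l ≠ 0 := ne_of_gt (lt_trans zero_lt_one hl1)
  have hlpos : (0 : Ordinal) < l := lt_trans zero_lt_one hl1
  have Fpt : ∀ a b x, F (a + b) x = F a (F b x) := fun a b x => congrFun (Fadd a b) x
  have labs : ∀ {r c : Ordinal}, r < l → l ≤ c → r + c = c :=
    fun hr hc => principal_absorp hP hr hc
  have ωabs : ∀ {r c : Ordinal}, r < ω → ω ≤ c → r + c = c :=
    fun hr hc => principal_absorp Ordinal.principal_add_omega0 hr hc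
  have Fr_fix : ∀ {r c : Ordinal}, r < l → l ≤ c → ∀ x, F r (F c x) = F c x := by
    intro r c hr hc x
    rw [← Fpt, labs hr hc]
  have Φ_fix : ∀ {b : Ordinal}, b ≠ 0 → ∀ x, Φ (F (l * (ω * b)) x) = F (l * (ω * b)) x := by
    intro b hb x
    apply hΦfix
    have h1 : (1 : Ordinal) + ω * b = ω * b :=
      ωabs one_lt_omega0 (Ordinal.le_mul_left ω (pos_iff_ne_zero.2 hb))
    have h2 : l + l * (ω * b) = l * (ω * b) := by
      calc l + l * (ω * b) = l * (1 + ω * b) := by rw [mul_add, mul_one]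
        _ = l * (ω * b) := by rw [h1]
    rw [← Fpt, h2]
  have Φit_fix : ∀ {b : Ordinal}, b ≠ 0 → ∀ (m : ℕ) x,
      Φ^[m] (F (l * (ω * b)) x) = F (l * (ω * b)) x := by
    intro b hb m x
    induction m with
    | zero => rfl
    | succ m IH => rw [Function.iterate_succ_apply', IH, Φ_fix hb]
  have FrΦ : ∀ {r : Ordinal}, r < l → ∀ (n : ℕ), n ≠ 0 → ∀ x, F r (Φ^[n] x) = Φ^[n] x := by
    intro r hr n hn x
    obtain ⟨k, rfl⟩ := Nat.exists_eq_succ_of_ne_zero hn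
    rw [Function.iterate_succ_apply']
    exact hΦD r _ hr
  have ke : ∀ (u : Ordinal) (m : ℕ) {r : Ordinal}, r < l → ∀ x,
      kfam F Φ l (l * (ω * u + m) + r) x = F (l * (ω * u)) (Φ^[m] (F r x)) :=
    fun u m r hr x => congrFun (kfam_eval F Φ hl0 u m hr) x
  have Φitn : ∀ n : ℕ, Order.IsNormal (Φ^[n]) := by
    intro n
    induction n with
    | zero => rw [Function.iterate_zero]; exact Order.IsNormal.id
    | succ n IH => rw [Function.iterate_succ']; exact hΦn.comp IH
  have knorm : ∀ ξ, Order.IsNormal (kfam F Φ l ξ) := by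
    intro ξ
    unfold kfam
    exact (Fn _).comp ((Φitn _).comp (Fn _))
  have k0 : kfam F Φ l 0 = id := by
    have h00 : (0 : Ordinal) = l * (ω * 0 + ((0 : ℕ) : Ordinal)) + 0 := by simp
    funext x
    rw [h00, ke 0 0 hlpos x]
    simp [mul_zero, F0]
  have k1 : kfam F Φ l 1 = f := by
    have h11 : (1 : Ordinal) = l * (ω * 0 + ((0 : ℕ) : Ordinal)) + 1 := by simp
    funext x
    rw [h11, ke 0 0 hl1 x]
    simp [mul_zero, F0, F1]
  have kl : kfam F Φ l l = Φ := by
    have hll : l * (ω * 0 + ((1 : ℕ) : Ordinal)) + 0 = l := by simp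
    funext x
    have h := ke 0 1 hlpos x
    rw [hll] at h
    rw [h]
    simp only [mul_zero, F0, id_eq, Function.iterate_one]
  have comp : ∀ ξ ζ, kfam F Φ l (ξ + ζ) = kfam F Φ l ξ ∘ kfam F Φ l ζ := by
    intro ξ ζ
    obtain ⟨a, m, r, hr, rfl⟩ := kfam_decomp hl0 ξ
    obtain ⟨b, n, s, hs, rfl⟩ := kfam_decomp hl0 ζ
    rcases eq_or_ne b 0 with rfl | hb
    · rcases Nat.eq_zero_or_pos n with rfl | hn
      · -- ζ = s
        have hζ : l * (ω * 0 + ((0 : ℕ) : Ordinal)) + s = s := by simp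
        have hrs : r + s < l := hP hr hs
        have hsum : (l * (ω * a + m) + r) + (l * (ω * 0 + ((0 : ℕ) : Ordinal)) + s)
            = l * (ω * a + m) + (r + s) := by rw [hζ, add_assoc]
        funext x
        rw [Function.comp_apply, hsum, ke a m hrs x, ke a m hr, ke 0 0 hs x]
        simp only [mul_zero, F0, id_eq, Function.iterate_zero, Fpt r s x]
      · -- ζ = l * n + s
        have hn0 : ((n : Ordinal)) ≠ 0 := by
          simpa using Nat.pos_iff_ne_zero.1 hn
        have hnpos : (0 : Ordinal) < (n : Ordinal) := pos_iff_ne_zero.2 hn0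
        have hζ : l * (ω * 0 + (n : Ordinal)) + s = l * (n : Ordinal) + s := by
          rw [mul_zero, zero_add]
        have hrB : r + l * (n : Ordinal) = l * (n : Ordinal) :=
          labs hr (Ordinal.le_mul_left l hnpos)
        have hsum : (l * (ω * a + m) + r) + (l * (ω * 0 + (n : Ordinal)) + s)
            = l * (ω * a + (((m + n : ℕ)) : Ordinal)) + s := by
          rw [hζ, ← add_assoc, add_assoc (l * (ω * a + m)) r (l * n), hrB,
            ← mul_add, add_assoc (ω * a) (m : Ordinal) (n : Ordinal)]
          push_cast
          ring_nf
        funext x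
        rw [Function.comp_apply, hsum, ke a (m + n) hs x, ke a m hr]
        rw [ke 0 n hs x]
        simp only [mul_zero, F0, id_eq]
        rw [FrΦ hr n (Nat.pos_iff_ne_zero.1 hn), ← Function.iterate_add_apply]
    · -- b ≠ 0
      have hωb : (0 : Ordinal) < ω * b :=
        lt_of_lt_of_le omega0_pos (Ordinal.le_mul_left ω (pos_iff_ne_zero.2 hb))
      have hB : (0 : Ordinal) < ω * b + n := lt_of_lt_of_le hωb le_self_add
      have hrB : r + l * (ω * b + n) = l * (ω * b + n) := labs hr (Ordinal.le_mul_left l hB)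
      have hmB : (m : Ordinal) + (ω * b + n) = ω * b + n := by
        rw [← add_assoc, ωabs (nat_lt_omega0 m) (Ordinal.le_mul_left ω (pos_iff_ne_zero.2 hb))]
      have hsum : (l * (ω * a + m) + r) + (l * (ω * b + n) + s)
          = l * (ω * (a + b) + n) + s := by
        rw [← add_assoc, add_assoc (l * (ω * a + m)) r _, hrB, ← mul_add,
          add_assoc (ω * a) (m : Ordinal) _, hmB, ← add_assoc (ω * a) (ω * b) (n : Ordinal),
          ← mul_add ω a b]
      funext x
      rw [Function.comp_apply, hsum, ke (a + b) n hs x, ke a m hr, ke b n hs x]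
      rw [Fr_fix hr (Ordinal.le_mul_left l hωb), Φit_fix hb, ← Fpt, ← mul_add, ← mul_add]
  exact ⟨⟨knorm, k0, k1, comp⟩, kl⟩

/-! ### The cohyperation witness family `hfam` -/

lemma ord_div_mono {a b c : Ordinal} (c0 : c ≠ 0) (h : a ≤ b) : a / c ≤ b / c := by
  rw [Ordinal.le_div c0]
  calc c * (a / c) ≤ c * (a / c) + a % c := le_self_add
    _ = a := Ordinal.div_add_mod a c
    _ ≤ b := h

noncomputable def hfam (G : Ordinal → Ordinal → Ordinal) (h1 : Ordinal → Ordinal) (l ξ : Ordinal) :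
    Ordinal → Ordinal :=
  if ξ / l < ω then G (ξ % l) ∘ h1^[natOf (ξ / l)] else fun _ => 0

lemma hfam_eval (G : Ordinal → Ordinal → Ordinal) (h1 : Ordinal → Ordinal) {l : Ordinal}
    (hl : l ≠ 0) (n : ℕ) {r : Ordinal} (hr : r < l) :
    hfam G h1 l (l * n + r) = G r ∘ h1^[n] := by
  have hq := (mul_add_div_mod hl hr (q := (n : Ordinal))).1
  have hm := (mul_add_div_mod hl hr (q := (n : Ordinal))).2
  unfold hfam
  rw [hq, hm, natOf_cast, if_pos (nat_lt_omega0 n)]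

lemma hfam_inf (G : Ordinal → Ordinal → Ordinal) (h1 : Ordinal → Ordinal) {l ξ : Ordinal}
    (h : ¬ ξ / l < ω) : hfam G h1 l ξ = fun _ => 0 := by
  unfold hfam
  rw [if_neg h]

lemma hfam_fin_decomp {l : Ordinal} (hl : l ≠ 0) {ξ : Ordinal} (h : ξ / l < ω) :
    ∃ (n : ℕ) (r : Ordinal), r < l ∧ ξ = l * n + r := by
  refine ⟨natOf (ξ / l), ξ % l, Ordinal.mod_lt ξ hl, ?_⟩
  rw [natOf_spec h, Ordinal.div_add_mod]

theorem hfam_weakCohyperation {g h1 : Ordinal → Ordinal} {G : Ordinal → Ordinal → Ordinal}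
    {l : Ordinal}
    (Gin : ∀ ξ, Initial (G ξ)) (G0 : G 0 = id) (G1 : G 1 = g)
    (Gadd : ∀ ξ ζ, G (ξ + ζ) = G ζ ∘ G ξ)
    (hP : Ordinal.Principal (· + ·) l) (hl2 : 2 ≤ l)
    (h1init : Initial h1)
    (h1tail : ∀ η y, η < l → h1 (G η y) = h1 y)
    (h1zero : h1 0 = 0) :
    WeakCohyperation g (hfam G h1 l) ∧ hfam G h1 l l = h1 := by
  have hl1 : (1 : Ordinal) < l := lt_of_lt_of_le one_lt_two hl2
  have hl0 : l ≠ 0 := ne_of_gt (lt_trans zero_lt_one hl1)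
  have hlpos : (0 : Ordinal) < l := lt_trans zero_lt_one hl1
  have Gpt : ∀ a b x, G (a + b) x = G b (G a x) := fun a b x => congrFun (Gadd a b) x
  have labs : ∀ {r c : Ordinal}, r < l → l ≤ c → r + c = c :=
    fun hr hc => principal_absorp hP hr hc
  have he : ∀ (n : ℕ) {r : Ordinal}, r < l → ∀ x,
      hfam G h1 l (l * n + r) x = G r (h1^[n] x) :=
    fun n r hr x => congrFun (hfam_eval G h1 hl0 n hr) x
  have h1it_zero : ∀ n : ℕ, h1^[n] (0 : Ordinal) = 0 := by
    intro n
    induction n with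
    | zero => rfl
    | succ n IH => rw [Function.iterate_succ_apply', IH, h1zero]
  have hzero : ∀ ξ, hfam G h1 l ξ 0 = 0 := by
    intro ξ
    by_cases hq : ξ / l < ω
    · obtain ⟨n, r, hr, rfl⟩ := hfam_fin_decomp hl0 hq
      rw [he n hr 0, h1it_zero]
      exact nonpos_iff_eq_zero.1 ((Gin r).le_self 0)
    · rw [hfam_inf G h1 hq]
  have h1it_tail : ∀ (n : ℕ), n ≠ 0 → ∀ (η y : Ordinal), η < l →
      h1^[n] (G η y) = h1^[n] y := by
    intro n hn η y hη
    obtain ⟨k, rfl⟩ := Nat.exists_eq_succ_of_ne_zero hn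
    rw [Function.iterate_succ_apply, Function.iterate_succ_apply, h1tail η y hη]
  have hinit : ∀ ξ, Initial (hfam G h1 l ξ) := by
    intro ξ
    by_cases hq : ξ / l < ω
    · obtain ⟨n, r, hr, rfl⟩ := hfam_fin_decomp hl0 hq
      rw [hfam_eval G h1 hl0 n hr]
      exact (h1init.iterate n).comp (Gin r)
    · rw [hfam_inf G h1 hq]
      exact Initial.const_zero
  have h0 : hfam G h1 l 0 = id := by
    have h00 : (0 : Ordinal) = l * ((0 : ℕ) : Ordinal) + 0 := by simp
    funext x
    rw [h00, he 0 hlpos x]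
    simp [G0]
  have hone : hfam G h1 l 1 = g := by
    have h11 : (1 : Ordinal) = l * ((0 : ℕ) : Ordinal) + 1 := by simp
    funext x
    rw [h11, he 0 hl1 x]
    simp [G1]
  have hl_eval : hfam G h1 l l = h1 := by
    have hll : l * ((1 : ℕ) : Ordinal) + 0 = l := by simp
    funext x
    have h := he 1 hlpos x
    rw [hll] at h
    rw [h]
    simp [G0]
  have comp : ∀ ξ ζ, hfam G h1 l (ξ + ζ) = hfam G h1 l ζ ∘ hfam G h1 l ξ := by
    intro ξ ζ
    by_cases hqa : ξ / l < ω
    · by_cases hqb : ζ / l < ω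
      · obtain ⟨m, r, hr, rfl⟩ := hfam_fin_decomp hl0 hqa
        obtain ⟨n, s, hs, rfl⟩ := hfam_fin_decomp hl0 hqb
        rcases Nat.eq_zero_or_pos n with rfl | hn
        · have hζ : l * ((0 : ℕ) : Ordinal) + s = s := by simp
          have hrs : r + s < l := hP hr hs
          have hsum : (l * m + r) + (l * ((0 : ℕ) : Ordinal) + s) = l * m + (r + s) := by
            rw [hζ, add_assoc]
          funext x
          rw [Function.comp_apply, hsum, he m hrs x, he m hr, he 0 hs]
          simp only [Function.iterate_zero, id_eq, Gpt r s]
        · have hn0 : ((n : Ordinal)) ≠ 0 := by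
            simpa using Nat.pos_iff_ne_zero.1 hn
          have hnpos : (0 : Ordinal) < (n : Ordinal) := pos_iff_ne_zero.2 hn0
          have hrB : r + l * (n : Ordinal) = l * (n : Ordinal) :=
            labs hr (Ordinal.le_mul_left l hnpos)
          have hsum : (l * m + r) + (l * (n : Ordinal) + s)
              = l * (((m + n : ℕ)) : Ordinal) + s := by
            rw [← add_assoc, add_assoc (l * (m : Ordinal)) r _, hrB, ← mul_add]
            push_cast
            ring_nf
          funext x
          rw [Function.comp_apply, hsum, he (m + n) hs x, he m hr, he n hs,
            h1it_tail n (Nat.pos_iff_ne_zero.1 hn) r _ hr, ← Function.iterate_add_apply,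
            Nat.add_comm n m]
      · have hqs : ¬ (ξ + ζ) / l < ω := fun hcon =>
          hqb (lt_of_le_of_lt (ord_div_mono hl0 le_add_self) hcon)
        rw [hfam_inf G h1 hqs, hfam_inf G h1 hqb]
        funext x
        simp
    · have hqs : ¬ (ξ + ζ) / l < ω := fun hcon =>
        hqa (lt_of_le_of_lt (ord_div_mono hl0 le_self_add) hcon)
      rw [hfam_inf G h1 hqs, hfam_inf G h1 hqa]
      funext x
      simp only [Function.comp_apply]
      exact (hzero ζ).symm
  exact ⟨⟨hinit, h0, hone, comp⟩, hl_eval⟩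

/-! ### The main step at additively principal ordinals -/

theorem principal_step {f g : Ordinal → Ordinal} {F G : Ordinal → Ordinal → Ordinal} {l : Ordinal}
    (Fn : ∀ ξ, Order.IsNormal (F ξ)) (F0 : F 0 = id) (F1 : F 1 = f)
    (Fadd : ∀ ξ ζ, F (ξ + ζ) = F ξ ∘ F ζ)
    (Fmin : ∀ h, WeakHyperation f h → ∀ ξ ζ, F ξ ζ ≤ h ξ ζ)
    (Gin : ∀ ξ, Initial (G ξ)) (G0 : G 0 = id) (G1 : G 1 = g)
    (Gadd : ∀ ξ ζ, G (ξ + ζ) = G ζ ∘ G ξ)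
    (Gmax : ∀ h, WeakCohyperation g h → ∀ ξ α, h ξ α ≤ G ξ α)
    (hP : Ordinal.Principal (· + ·) l) (hl2 : 2 ≤ l)
    (IH : ∀ η, η < l → (∀ α, G η (F η α) = α) ∧ (∀ x, G η x = x → F η x = x)) :
    (∀ α, G l (F l α) = α) ∧ (∀ x, G l x = x → F l x = x) := by
  have hl1 : (1 : Ordinal) < l := lt_of_lt_of_le one_lt_two hl2
  have hl0 : l ≠ 0 := ne_of_gt (lt_trans zero_lt_one hl1)
  have hlpos : (0 : Ordinal) < l := lt_trans zero_lt_one hl1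
  have Fpt : ∀ a b x, F (a + b) x = F a (F b x) := fun a b x => congrFun (Fadd a b) x
  have Gpt : ∀ a b x, G (a + b) x = G b (G a x) := fun a b x => congrFun (Gadd a b) x
  have Gle : ∀ ξ y, G ξ y ≤ y := fun ξ => (Gin ξ).le_self
  have habs : ∀ η, η < l → η + l = l := Ordinal.principal_add_iff_add_left_eq_self.1 hP
  have FlD : ∀ η, η < l → ∀ x, F η (F l x) = F l x := by
    intro η hη x
    have h := Fpt η l x
    rw [habs η hη] at h
    exact h.symm
  set D : Set Ordinal := {x | ∀ η, η < l → F η x = x} with hD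
  have DIio : Nonempty (Set.Iio l) := ⟨⟨0, hlpos⟩⟩
  have Dunb : ¬ BddAbove D := by
    rw [not_bddAbove_iff]
    intro β
    refine ⟨Ordinal.nfp (F l) (β + 1), ?_, lt_of_lt_of_le (lt_add_one β) (Ordinal.le_nfp _ _)⟩
    have hfix : F l (Ordinal.nfp (F l) (β + 1)) = Ordinal.nfp (F l) (β + 1) :=
      Ordinal.nfp_fp (Fn l) (β + 1)
    intro η hη
    calc F η (Ordinal.nfp (F l) (β + 1)) = F η (F l (Ordinal.nfp (F l) (β + 1))) := by
          rw [hfix]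
      _ = F l (Ordinal.nfp (F l) (β + 1)) := FlD η hη _
      _ = Ordinal.nfp (F l) (β + 1) := hfix
  set Φ : Ordinal → Ordinal := enumOrd D with hΦ
  have Φmem : ∀ u, Φ u ∈ D := fun u => enumOrd_mem Dunb u
  have Φsm : StrictMono Φ := enumOrd_strictMono Dunb
  have Φid : ∀ u, u ≤ Φ u := fun u => Φsm.le_apply
  have Dclosed : IsClosed D := by
    rw [Ordinal.isClosed_iff_iSup]
    intro ι hι fam hfam η hη
    rw [(Fn η).map_iSup Ordinal.bddAbove_of_small]
    exact iSup_congr fun i => hfam i η hη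
  have Φn : Order.IsNormal Φ := (enumOrd_isNormal_iff_isClosed Dunb).2 Dclosed
  have ΦleF : ∀ u, Φ u ≤ F l u := by
    intro u
    induction u using Ordinal.induction with
    | h u IHu =>
      have hmem : F l u ∈ D := fun η hη => FlD η hη u
      have hgoal : enumOrd D u ≤ F l u := by
        apply enumOrd_le_of_forall_lt hmem
        intro v hv
        exact lt_of_le_of_lt (IHu v hv) ((Fn l).strictMono hv)
      exact hgoal
  have ΦfixC : ∀ x, F l x = x → Φ x = x := by
    intro x hx
    refine le_antisymm ?_ (Φid x)
    calc Φ x ≤ F l x := ΦleF x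
      _ = x := hx
  have hΦD' : ∀ r x, r < l → F r (Φ x) = Φ x := fun r x hr => Φmem x r hr
  obtain ⟨kW, kl⟩ := kfam_weakHyperation Fn F0 F1 Fadd hP hl2 Φn hΦD' ΦfixC
  have FlΦ : ∀ x, F l x = Φ x := by
    intro x
    refine le_antisymm ?_ (ΦleF x)
    have h := Fmin _ kW l x
    rwa [kl] at h
  have GfixD : ∀ η, η < l → ∀ d, d ∈ D → G η d = d := by
    intro η hη d hd
    have h := (IH η hη).1 d
    rwa [hd η hη] at h
  have Gll : ∀ η, η < l → ∀ y, G l (G η y) = G l y := by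
    intro η hη y
    have h := Gpt η l y
    rw [habs η hη] at h
    exact h.symm
  have stab : ∀ y, ∃ d, d ∈ D ∧ d ≤ y ∧ G l y = G l d := by
    intro y
    set S : Set Ordinal := Set.range (fun ζ : Set.Iio l => G ζ.1 y) with hS
    have hSne : S.Nonempty := Set.range_nonempty _
    obtain ⟨ζ0, hζ0⟩ := csInf_mem hSne
    have hζ0' : G ζ0.1 y = sInf S := hζ0
    refine ⟨G ζ0.1 y, ?_, Gle ζ0.1 y, (Gll ζ0.1 ζ0.2 y).symm⟩
    have hdE : ∀ η, η < l → G η (G ζ0.1 y) = G ζ0.1 y := by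
      intro η hη
      refine le_antisymm (Gle η _) ?_
      have h1 : G (ζ0.1 + η) y ∈ S := ⟨⟨ζ0.1 + η, hP ζ0.2 hη⟩, rfl⟩
      have h2 : sInf S ≤ G (ζ0.1 + η) y := csInf_le' h1
      rw [Gpt ζ0.1 η y, ← hζ0'] at h2
      exact h2
    intro η hη
    exact (IH η hη).2 _ (hdE η hη)
  -- the collapse function c
  set c : Ordinal → Ordinal := fun y => sInf {β | y ≤ Φ β} with hc
  have cspec : ∀ y, y ≤ Φ (c y) := by
    intro y
    exact csInf_mem (s := {β | y ≤ Φ β}) ⟨y, Φid y⟩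
  have cmin : ∀ y β, y ≤ Φ β → c y ≤ β := fun y β h => csInf_le' h
  have cΦ : ∀ u, c (Φ u) = u := by
    intro u
    refine le_antisymm (cmin _ _ le_rfl) ?_
    by_contra hcon
    push_neg at hcon
    exact absurd (cspec (Φ u)) (not_le.2 (Φsm hcon))
  have cmono : ∀ {y y'}, y ≤ y' → c y ≤ c y' :=
    fun {y y'} h => cmin _ _ (le_trans h (cspec y'))
  have clt : ∀ u y, u < c y → Φ u < y := by
    intro u y h
    by_contra hcon
    push_neg at hcon
    exact absurd (cmin y u hcon) (not_le.2 h)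
  have cley : ∀ y, c y ≤ y := fun y => cmin y y (Φid y)
  have czero : c 0 = 0 := nonpos_iff_eq_zero.1 (cmin 0 0 zero_le)
  -- the function h1 = the λ-th level of the witness cohyperation
  set h1 : Ordinal → Ordinal := fun y => sInf (Set.range (fun ζ : Set.Iio l => c (G ζ.1 y)))
    with hh1
  have h1le : ∀ y ζ, ζ < l → h1 y ≤ c (G ζ y) := fun y ζ hζ => csInf_le' ⟨⟨ζ, hζ⟩, rfl⟩
  have h1mem : ∀ y, ∃ ζ : Set.Iio l, h1 y = c (G ζ.1 y) := by
    intro y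
    obtain ⟨ζ, hζ⟩ := csInf_mem (Set.range_nonempty (fun ζ : Set.Iio l => c (G ζ.1 y)))
    exact ⟨ζ, hζ.symm⟩
  have h1ley : ∀ y, h1 y ≤ c y := by
    intro y
    have h := h1le y 0 hlpos
    rwa [congrFun G0 y] at h
  have h1fixΦ : ∀ u, h1 (Φ u) = u := by
    intro u
    obtain ⟨ζ, hζ⟩ := h1mem (Φ u)
    rw [hζ, GfixD ζ.1 ζ.2 _ (Φmem u), cΦ]
  have h1tail : ∀ η y, η < l → h1 (G η y) = h1 y := by
    intro η y hη
    refine le_antisymm ?_ ?_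
    · obtain ⟨ζ, hζ⟩ := h1mem y
      have hle : ζ.1 ≤ η + ζ.1 := le_add_self
      set δ := (η + ζ.1) - ζ.1 with hδ
      have hδeq : ζ.1 + δ = η + ζ.1 := Ordinal.add_sub_cancel_of_le hle
      have h2 : G (η + ζ.1) y = G δ (G ζ.1 y) := by
        rw [← hδeq, Gpt ζ.1 δ y]
      have h3 : G (η + ζ.1) y ≤ G ζ.1 y := by
        rw [h2]; exact Gle δ _
      calc h1 (G η y) ≤ c (G ζ.1 (G η y)) := h1le _ ζ.1 ζ.2
        _ = c (G (η + ζ.1) y) := by rw [Gpt η ζ.1 y]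
        _ ≤ c (G ζ.1 y) := cmono h3
        _ = h1 y := hζ.symm
    · refine le_csInf (Set.range_nonempty _) ?_
      rintro b ⟨ζ, rfl⟩
      show h1 y ≤ c (G ζ.1 (G η y))
      have h2 : c (G ζ.1 (G η y)) = c (G (η + ζ.1) y) := by rw [Gpt η ζ.1 y]
      rw [h2]
      exact h1le y (η + ζ.1) (hP hη ζ.2)
  have h1zero : h1 0 = 0 := by
    refine nonpos_iff_eq_zero.1 ?_
    have h := h1le 0 0 hlpos
    rw [congrFun G0 0] at h
    simpa [czero] using h
  have h1init : Initial h1 := by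
    intro β
    refine downward_closed_eq_Iio (β := β) ?_ ?_
    · rintro x ⟨y, hy, rfl⟩
      exact lt_of_le_of_lt (le_trans (h1ley y) (cley y)) hy
    · rintro u v huv ⟨y, hy, rfl⟩
      refine ⟨Φ u, ?_, h1fixΦ u⟩
      have h2 : u < c y := lt_of_lt_of_le huv (h1ley y)
      exact lt_trans (clt u y h2) hy
  obtain ⟨hW, hl_eval⟩ := hfam_weakCohyperation Gin G0 G1 Gadd hP hl2 h1init h1tail h1zero
  have Pge : ∀ α, α ≤ G l (Φ α) := by
    intro α
    have h := Gmax _ hW l (Φ α)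
    rwa [hl_eval, h1fixΦ α] at h
  have Ple : ∀ α, G l (Φ α) ≤ α := by
    intro α
    induction α using Ordinal.induction with
    | h α IHα =>
      by_contra hcon
      push_neg at hcon
      obtain ⟨γ, hγ⟩ := Gin l (Φ α + 1)
      have hβmem : G l (Φ α) ∈ {α' | α' < γ} := by
        rw [← hγ]
        refine ⟨Φ α, ?_, rfl⟩
        show Φ α < Φ α + 1
        exact lt_add_one _
      have hαmem : α ∈ G l '' {α' | α' < Φ α + 1} := by
        rw [hγ]
        exact lt_trans hcon hβmem
      obtain ⟨y, hy, hyα⟩ := hαmem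
      have hy' : y ≤ Φ α := Order.lt_add_one_iff.mp hy
      obtain ⟨d, hdD, hdy, hGyd⟩ := stab y
      obtain ⟨u, hu0⟩ := enumOrd_surjective Dunb hdD
      have hu : Φ u = d := hu0
      have huα : u ≤ α := by
        rw [← Φsm.le_iff_le]
        calc Φ u = d := hu
          _ ≤ y := hdy
          _ ≤ Φ α := hy'
      have hGu : G l (Φ u) = α := by
        rw [hu, ← hGyd, hyα]
      rcases lt_or_eq_of_le huα with hlt | rfl
      · exact absurd hGu (ne_of_lt (lt_of_le_of_lt (IHα u hlt) hlt))
      · exact absurd hGu (ne_of_gt hcon)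
  have PΦ : ∀ α, G l (Φ α) = α := fun α => le_antisymm (Ple α) (Pge α)
  have Pl : ∀ α, G l (F l α) = α := by
    intro α
    rw [FlΦ α]
    exact PΦ α
  refine ⟨Pl, ?_⟩
  intro x hx
  obtain ⟨d, hdD, hdx, hGxd⟩ := stab x
  obtain ⟨u, hu0⟩ := enumOrd_surjective Dunb hdD
  have hu : Φ u = d := hu0
  have hux : u = x := by
    rw [← hx, hGxd, ← hu, PΦ u]
  have hΦx : Φ x = x := by
    refine le_antisymm ?_ (Φid x)
    calc Φ x = Φ u := by rw [hux]
      _ = d := hu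
      _ ≤ x := hdx
  rw [FlΦ x, hΦx]

/-! ### The main theorem -/

theorem cohyperation_hyperation_comp (f : Ordinal → Ordinal) (hf : Order.IsNormal f)
    (F : Ordinal → Ordinal → Ordinal) (hF : IsHyperation f F)
    (g : Ordinal → Ordinal) (hg : LeftAdjoint f g)
    (G : Ordinal → Ordinal → Ordinal) (hG : IsCohyperation g G) :
    ∀ ξ ζ : Ordinal, ξ < ζ →
      G ξ ∘ F ζ = F (ζ - ξ) ∧ G ζ ∘ F ξ = G (ζ - ξ) := by
  obtain ⟨⟨Fn, F0, F1, Fadd⟩, Fmin⟩ := hF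
  obtain ⟨⟨Gin, G0, G1, Gadd⟩, Gmax⟩ := hG
  have Fpt : ∀ a b x, F (a + b) x = F a (F b x) := fun a b x => congrFun (Fadd a b) x
  have Gpt : ∀ a b x, G (a + b) x = G b (G a x) := fun a b x => congrFun (Gadd a b) x
  have main : ∀ ξ, (∀ α, G ξ (F ξ α) = α) ∧ (∀ x, G ξ x = x → F ξ x = x) := by
    intro ξ
    induction ξ using Ordinal.induction with
    | h ξ IH =>
      rcases eq_or_ne ξ 0 with rfl | hξ0
      · constructor
        · intro α; rw [F0, G0]; rfl
        · intro x _; rw [F0]; rfl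
      rcases eq_or_ne ξ 1 with rfl | hξ1
      · constructor
        · intro α
          rw [F1, G1]
          exact (hg (f α) α).1 rfl
        · intro x hx
          rw [G1] at hx
          rw [F1]
          by_contra hne
          have hlt : x < f x := lt_of_le_of_ne hf.strictMono.le_apply (Ne.symm hne)
          have h2 := (hg x x).2 hlt
          rw [hx] at h2
          exact lt_irrefl x h2
      by_cases hPr : Ordinal.Principal (· + ·) ξ
      · have h1lt : (1 : Ordinal) < ξ :=
          lt_of_le_of_ne (Ordinal.one_le_iff_ne_zero.2 hξ0) (Ne.symm hξ1)
        have h2 : (2 : Ordinal) ≤ ξ := by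
          have := Order.add_one_le_iff.2 h1lt
          norm_num at this
          exact this
        exact principal_step Fn F0 F1 Fadd Fmin Gin G0 G1 Gadd Gmax hPr h2 IH
      · obtain ⟨a, b, ha, hb, hab⟩ : ∃ a b, a < ξ ∧ b < ξ ∧ ξ ≤ a + b := by
          unfold Ordinal.Principal Ordinal.IsPrincipal at hPr
          push_neg at hPr
          obtain ⟨a, b, ha, hb, h⟩ := hPr
          exact ⟨a, b, ha, hb, h⟩
        have ha0 : a ≠ 0 := by
          rintro rfl
          rw [zero_add] at hab
          exact absurd hab (not_le.2 hb)
        set b' := ξ - a with hb'def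
        have hsplit : a + b' = ξ := Ordinal.add_sub_cancel_of_le (le_of_lt ha)
        have hb'le : b' ≤ b := Ordinal.sub_le.2 hab
        have hb'lt : b' < ξ := lt_of_le_of_lt hb'le hb
        have IHa := IH a ha
        have IHb := IH b' hb'lt
        have hF' : ∀ y, F ξ y = F a (F b' y) := by
          intro y
          have h := Fpt a b' y
          rwa [hsplit] at h
        have hG' : ∀ y, G ξ y = G b' (G a y) := by
          intro y
          have h := Gpt a b' y
          rwa [hsplit] at h
        constructor
        · intro α
          rw [hF' α, hG' (F a (F b' α)), IHa.1 (F b' α), IHb.1 α]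
        · intro x hx
          rw [hG' x] at hx
          have h3 : G a x ≤ x := (Gin a).le_self x
          have h4 : G b' (G a x) ≤ G a x := (Gin b').le_self _
          rw [hx] at h4
          have h5 : G a x = x := le_antisymm h3 h4
          rw [h5] at hx
          rw [hF' x, IHb.2 x hx, IHa.2 x h5]
  intro ξ ζ hlt
  have hle : ξ ≤ ζ := le_of_lt hlt
  have hsub : ξ + (ζ - ξ) = ζ := Ordinal.add_sub_cancel_of_le hle
  constructor
  · funext x
    have h1 : F ζ x = F ξ (F (ζ - ξ) x) := by
      have h := Fpt ξ (ζ - ξ) x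
      rwa [hsub] at h
    show G ξ (F ζ x) = F (ζ - ξ) x
    rw [h1, (main ξ).1]
  · funext x
    have h2 : G ζ (F ξ x) = G (ζ - ξ) (G ξ (F ξ x)) := by
      have h := Gpt ξ (ζ - ξ) (F ξ x)
      rwa [hsub] at h
    show G ζ (F ξ x) = G (ζ - ξ) x
    rw [h2, (main ξ).1]
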